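/- Let (R,m) be a Cohen–Macaulay Noetherian local ring of dimension d ≥ 2 and I an m-primary ideal. Suppose x ∈ m and J = (a_1,…,a_{d−1}) with a_i ∈ I satisfy: (i) mI² = xI² + JmI and (x,J) is a joint reduction so that mI^n = xI^n + J^{n−1}mI for all n ≥ 2; and (ii) a_1,…,a_{d−1} form a regular sequence on R with (J : x) ∩ I^n = JI^{n−1} for all n. Then J ∩ mI^n = mJI^{n−1} for all n ≥ 2. (Key step: J ∩ xI^n ⊆ mJI^{n−1}, since y = xi ∈ J ∩ xI^n with i ∈ I^n gives i ∈ (J:x) ∩ I^n = JI^{n−1}.) -/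

import Mathlib

open IsLocalRing

/-- The length of a module, as the Krull dimension of its lattice of submodules. -/
noncomputable def modLength (R M : Type*) [Ring R] [AddCommGroup M] [Module R M] :
    WithBot ℕ∞ :=
  Order.krullDim (Submodule R M)

/-- The length `ℓ(P/N)` of the subquotient `P/N` of `R` determined by ideals `N ≤ P`. -/
noncomputable def qlen {R : Type*} [CommRing R] (N P : Ideal R) : WithBot ℕ∞ :=
  modLength R (↥P ⧸ (Submodule.comap P.subtype N))

/-- A Noetherian local ring is Cohen–Macaulay if some system of parameters
is a regular sequence. -/
def IsCMLocal (R : Type*) [CommRing R] [IsLocalRing R] : Prop :=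
  ∃ rs : List R, RingTheory.Sequence.IsRegular R rs ∧
    (Ideal.span {x | x ∈ rs}).radical = maximalIdeal R ∧
    (rs.length : WithBot ℕ∞) = ringKrullDim R

/-- in a CM local ring of dimension `d ≥ 2` with `I` `m`-primary, if `x ∈ m` and
`J = (a₁,…,a_{d−1})` with `aᵢ ∈ I` satisfy (i) `mI² = xI² + JmI` and `mIⁿ = xIⁿ + J^{n−1}mI`
for all `n ≥ 2`, and (ii) `a₁,…,a_{d−1}` is a regular sequence on `R` with
`(J : x) ∩ Iⁿ = JI^{n−1}` for all `n ≥ 1`, then `J ∩ mIⁿ = mJI^{n−1}` for all `n ≥ 2`. -/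
theorem stmt11 {R : Type*} [CommRing R] [IsLocalRing R] [IsNoetherianRing R]
    (d : ℕ) (hd : 2 ≤ d)
    (hCM : IsCMLocal R) (hdim : ringKrullDim R = (d : WithBot ℕ∞))
    (I : Ideal R) (hIm : I ≤ maximalIdeal R) (hprim : ∃ k, maximalIdeal R ^ k ≤ I)
    (x : R) (hx : x ∈ maximalIdeal R)
    (a : Fin (d - 1) → R) (ha : ∀ i, a i ∈ I)
    (hred2 : maximalIdeal R * I ^ 2 =
        Ideal.span {x} * I ^ 2 + Ideal.span (Set.range a) * (maximalIdeal R * I))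
    (hredn : ∀ n : ℕ, 2 ≤ n →
        maximalIdeal R * I ^ n =
          Ideal.span {x} * I ^ n +
            Ideal.span (Set.range a) ^ (n - 1) * (maximalIdeal R * I))
    (hregseq : RingTheory.Sequence.IsRegular R (List.ofFn a))
    (hcolon : ∀ n : ℕ, 1 ≤ n →
        (Ideal.span (Set.range a)).colon (Ideal.span {x}) ⊓ I ^ n =
          Ideal.span (Set.range a) * I ^ (n - 1)) :
    ∀ n : ℕ, 2 ≤ n →
      Ideal.span (Set.range a) ⊓ (maximalIdeal R * I ^ n) =
        maximalIdeal R * Ideal.span (Set.range a) * I ^ (n - 1) := by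

  intro n hn
  obtain ⟨k, rfl⟩ : ∃ k, n = k + 2 := ⟨n - 2, by omega⟩
  set J := Ideal.span (Set.range a) with hJdef
  set m := maximalIdeal R with hmdef
  have hJI : J ≤ I := Ideal.span_le.mpr (by rintro _ ⟨i, rfl⟩; exact ha i)
  have hsub : k + 2 - 1 = k + 1 := rfl
  rw [hsub]
  have hmJle : m * J * I ^ (k + 1) ≤ J :=
    le_trans Ideal.mul_le_left Ideal.mul_le_right
  have hmJle2 : m * J * I ^ (k + 1) ≤ m * I ^ (k + 2) := by
    have : m * J * I ^ (k + 1) ≤ m * I * I ^ (k + 1) := by gcongr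
    calc m * J * I ^ (k + 1) ≤ m * I * I ^ (k + 1) := this
      _ = m * I ^ (k + 2) := by ring
  apply le_antisymm
  · intro y hy
    obtain ⟨hyJ, hym⟩ := Submodule.mem_inf.mp hy
    rw [hredn (k + 2) (by omega), hsub] at hym
    obtain ⟨u, hu, z, hz, rfl⟩ := Submodule.mem_sup.mp hym
    obtain ⟨i, hi, rfl⟩ := Ideal.mem_span_singleton_mul.mp hu
    have hzle : J ^ (k + 1) * (m * I) ≤ m * J * I ^ (k + 1) := by
      have h1 : J ^ (k + 1) * (m * I) = m * (J * (J ^ k * I)) := by ring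
      have h2 : m * (J * (J ^ k * I)) ≤ m * (J * (I ^ k * I)) := by
        gcongr
      calc J ^ (k + 1) * (m * I) = m * (J * (J ^ k * I)) := h1
        _ ≤ m * (J * (I ^ k * I)) := h2
        _ = m * J * I ^ (k + 1) := by ring
    have hzm : z ∈ m * J * I ^ (k + 1) := hzle hz
    have hxiJ : x * i ∈ J := by
      have : x * i = (x * i + z) - z := by ring
      rw [this]
      exact Submodule.sub_mem _ hyJ (hmJle hzm)
    have hiC : i ∈ J.colon (Ideal.span {x}) := Ideal.mem_colon_span_singleton.mpr (by rwa [mul_comm])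
    have hiJI : i ∈ J * I ^ (k + 1) := by
      have hc := hcolon (k + 2) (by omega)
      rw [hsub] at hc
      rw [← hc]
      exact Submodule.mem_inf.mpr ⟨hiC, hi⟩
    have hxim : x * i ∈ m * J * I ^ (k + 1) := by
      have h1 : x * i ∈ Ideal.span {x} * (J * I ^ (k + 1)) :=
        Ideal.mul_mem_mul (Ideal.mem_span_singleton_self x) hiJI
      have h2 : Ideal.span {x} * (J * I ^ (k + 1)) ≤ m * (J * I ^ (k + 1)) := by
        gcongr
        exact (Ideal.span_singleton_le_iff_mem m).mpr hx
      have h3 : m * (J * I ^ (k + 1)) = m * J * I ^ (k + 1) := by ring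
      exact h3 ▸ h2 h1
    exact Submodule.add_mem _ hxim hzm
  · exact le_inf hmJle hmJle2
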